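/- For ordinals α, β below ω^ω with Cantor normal forms α = Σ a_i ω^i and β = Σ b_i ω^i, the equality α + β = α ⨣ β holds if and only if the degree of β (the largest i with b_i ≠ 0) is at most the order of α (the smallest i with a_i ≠ 0), provided both are nonzero. -/

import Mathlib

universe u

namespace Ordinal

/-- Natural (Hessenberg) addition of ordinals, as formerly in Mathlib's
`Mathlib/SetTheory/Ordinal/NaturalOps.lean` (removed from Mathlib since). -/
noncomputable def nadd (a b : Ordinal.{u}) : Ordinal.{u} :=
  max (⨆ x : Set.Iio a, Order.succ (nadd x.1 b)) (⨆ x : Set.Iio b, Order.succ (nadd a x.1))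
termination_by (a, b)
decreasing_by all_goals cases x; decreasing_tactic

end Ordinal

infixl:65 " ♯ " => Ordinal.nadd

open Ordinal

/-- The ordinal `ω^d * a_d + ... + ω * a_1 + a_0`, i.e. the ordinal below `ω^ω` with
Cantor normal form given by the natural-number coefficients `a 0, ..., a d`. -/
noncomputable def cnf (d : ℕ) (a : ℕ → ℕ) : Ordinal :=
  ((List.range (d + 1)).reverse.map (fun i => ω ^ i * (a i : Ordinal))).sum

theorem nadd_def' (a b : Ordinal.{u}) : a ♯ b =
    max (⨆ x : Set.Iio a, Order.succ (x.1 ♯ b)) (⨆ x : Set.Iio b, Order.succ (a ♯ x.1)) := by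
  rw [Ordinal.nadd]

theorem nadd_le_iff {a b c : Ordinal.{u}} :
    a ♯ b ≤ c ↔ (∀ a' < a, a' ♯ b < c) ∧ ∀ b' < b, a ♯ b' < c := by
  rw [nadd_def', max_le_iff, Ordinal.iSup_le_iff, Ordinal.iSup_le_iff]
  simp only [Order.succ_le_iff, Subtype.forall, Set.mem_Iio]

theorem lt_nadd_iff {a b c : Ordinal.{u}} :
    c < a ♯ b ↔ (∃ a' < a, c ≤ a' ♯ b) ∨ ∃ b' < b, c ≤ a ♯ b' := by
  rw [← not_le, nadd_le_iff]
  simp only [not_and_or, not_forall, not_lt, exists_prop]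

theorem nadd_lt_nadd_right {a b : Ordinal.{u}} (h : a < b) (c : Ordinal.{u}) : a ♯ c < b ♯ c :=
  lt_nadd_iff.mpr (Or.inl ⟨a, h, le_rfl⟩)

theorem nadd_lt_nadd_left {a b : Ordinal.{u}} (h : a < b) (c : Ordinal.{u}) : c ♯ a < c ♯ b :=
  lt_nadd_iff.mpr (Or.inr ⟨a, h, le_rfl⟩)

theorem nadd_le_nadd_aux (a : Ordinal.{u}) :
    ∀ b a' b' : Ordinal.{u}, a ≤ a' → b ≤ b' → a ♯ b ≤ a' ♯ b' := by
  induction a using Ordinal.induction with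
  | _ a IHa =>
  intro b
  induction b using Ordinal.induction with
  | _ b IHb =>
  intro a' b' ha hb
  refine nadd_le_iff.mpr ⟨fun a'' h => ?_, fun b'' h => ?_⟩
  · exact (IHa a'' h b a'' b' le_rfl hb).trans_lt (nadd_lt_nadd_right (h.trans_le ha) _)
  · exact (IHb b'' h a' b'' ha le_rfl).trans_lt (nadd_lt_nadd_left (h.trans_le hb) _)

theorem nadd_le_nadd {a a' b b' : Ordinal.{u}} (ha : a ≤ a') (hb : b ≤ b') : a ♯ b ≤ a' ♯ b' :=
  nadd_le_nadd_aux a b a' b' ha hb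

theorem le_nadd_self (a b : Ordinal.{u}) : a ≤ a ♯ b := by
  induction a using Ordinal.induction with
  | _ a IH =>
  exact le_of_forall_lt fun c hc => (IH c hc).trans_lt (nadd_lt_nadd_right hc b)

theorem add_le_nadd (a b : Ordinal.{u}) : a + b ≤ a ♯ b := by
  induction b using Ordinal.induction with
  | _ b IH =>
  rcases eq_or_ne b 0 with rfl | hb
  · rw [add_zero]; exact le_nadd_self a 0
  · refine le_of_forall_lt fun c hc => ?_
    obtain ⟨d, hd, hcd⟩ := (Ordinal.lt_add_iff hb).mp hc
    exact hcd.trans_lt ((IH d hd).trans_lt (nadd_lt_nadd_left hd a))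

@[simp] theorem nadd_zero (a : Ordinal.{u}) : a ♯ 0 = a := by
  induction a using Ordinal.induction with
  | _ a IH =>
  refine le_antisymm (nadd_le_iff.mpr ⟨fun a' h => ?_, fun b' h => ?_⟩) (le_nadd_self a 0)
  · rw [IH a' h]; exact h
  · simp at h

theorem nadd_nat (a : Ordinal.{u}) (n : ℕ) : a ♯ (n : Ordinal) = a + n := by
  induction n using Nat.strong_induction_on generalizing a with
  | _ n IHn =>
  induction a using Ordinal.induction with
  | _ a IHa =>
  refine le_antisymm (nadd_le_iff.mpr ⟨fun a' h => ?_, fun b' h => ?_⟩) (add_le_nadd a n)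
  · rw [IHa a' h]
    calc a' + (n:Ordinal) < a' + ((n + 1 : ℕ) : Ordinal) := by
          apply add_lt_add_right; exact_mod_cast Nat.lt_succ_self n
      _ = a' + 1 + n := by rw [add_assoc]; congr 1; exact_mod_cast (Nat.add_comm n 1)
      _ ≤ a + n := add_le_add_left (by rw [Ordinal.add_one_eq_succ]; exact Order.succ_le_of_lt h) _
  · obtain ⟨m, rfl⟩ := Ordinal.lt_omega0.mp (h.trans (natCast_lt_omega0 n))
    have hm : m < n := by exact_mod_cast h
    rw [IHn m hm]
    exact add_lt_add_right h a


theorem cnf_zero (a : ℕ → ℕ) : cnf 0 a = a 0 := by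
  simp [cnf, List.range_succ]

theorem cnf_succ (d : ℕ) (a : ℕ → ℕ) :
    cnf (d+1) a = ω ^ (d+1) * (a (d+1) : Ordinal) + cnf d a := by
  rw [cnf, cnf, List.range_succ, List.reverse_append]
  simp

theorem omega_pow_ne_zero (e : ℕ) : (ω:Ordinal) ^ e ≠ 0 := pow_ne_zero e omega0_ne_zero

theorem omega_pow_pos (e : ℕ) : (0:Ordinal) < ω ^ e :=
  pos_iff_ne_zero.mpr (omega_pow_ne_zero e)

theorem omega_pow_le {e f : ℕ} (h : e ≤ f) : (ω:Ordinal) ^ e ≤ ω ^ f :=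
  pow_le_pow_right₀ one_lt_omega0.le h

theorem cnf_congr {d : ℕ} {a b : ℕ → ℕ} (h : ∀ i ≤ d, a i = b i) : cnf d a = cnf d b := by
  unfold cnf
  congr 1
  apply List.map_congr_left
  intro i hi
  rw [List.mem_reverse, List.mem_range] at hi
  rw [h i (Nat.lt_succ_iff.mp hi)]

theorem cnf_eq_zero {d : ℕ} {a : ℕ → ℕ} (h : ∀ i ≤ d, a i = 0) : cnf d a = 0 := by
  induction d with
  | zero => simp [cnf_zero, h 0 le_rfl]
  | succ d ih =>
      rw [cnf_succ, h (d+1) le_rfl, ih fun i hi => h i (hi.trans (Nat.le_succ d))]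
      simp

theorem principal_add_omega_pow (e : ℕ) : Principal (· + ·) ((ω:Ordinal) ^ e) := by
  have := principal_add_omega0_opow ((e : ℕ) : Ordinal)
  rwa [opow_natCast] at this

theorem omega_pow_mul_nat_lt (e k : ℕ) : (ω:Ordinal) ^ e * k < ω ^ (e+1) := by
  rw [pow_succ]
  exact (mul_lt_mul_iff_right₀ (omega_pow_pos e)).mpr (natCast_lt_omega0 _)

theorem cnf_lt (d : ℕ) (a : ℕ → ℕ) : cnf d a < ω ^ (d + 1) := by
  induction d with
  | zero => rw [cnf_zero]; simpa using natCast_lt_omega0 (a 0)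
  | succ d ih =>
      rw [cnf_succ]
      exact principal_add_omega_pow (d+2) (omega_pow_mul_nat_lt _ _)
        (ih.trans_le (omega_pow_le (by omega)))

theorem add_omega_pow {e : ℕ} {x : Ordinal} (hx : x < ω ^ e) : x + ω ^ e = ω ^ e := by
  have := Ordinal.add_omega0_opow (b := ((e:ℕ):Ordinal)) (by rwa [opow_natCast])
  rwa [opow_natCast] at this

theorem add_omega_pow_mul {e k : ℕ} {x : Ordinal} (hx : x < ω ^ e) (hk : k ≠ 0) :
    x + ω ^ e * k = ω ^ e * k := by
  obtain ⟨m, rfl⟩ := Nat.exists_eq_succ_of_ne_zero hk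
  have h1 : ((m+1 : ℕ) : Ordinal) = 1 + (m:Ordinal) := by norm_cast; omega
  rw [h1, mul_add, mul_one, ← add_assoc, add_omega_pow hx]

theorem cnf_lt_cnf {d : ℕ} {x y : ℕ → ℕ} (hle : ∀ i ≤ d, x i ≤ y i)
    (k : ℕ) (hk : k ≤ d) (hstrict : x k < y k) : cnf d x < cnf d y := by
  induction d with
  | zero =>
      interval_cases k
      rw [cnf_zero, cnf_zero]
      exact_mod_cast hstrict
  | succ d ih =>
      rcases eq_or_lt_of_le (hle (d+1) le_rfl) with heq | hlt
      · have hne : k ≠ d+1 := fun h => by rw [h, heq] at hstrict; exact lt_irrefl _ hstrict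
        have hk' : k ≤ d := by omega
        rw [cnf_succ, cnf_succ, heq]
        exact add_lt_add_right (ih (fun i hi => hle i (by omega)) hk') _
      · rw [cnf_succ, cnf_succ]
        calc ω ^ (d+1) * (x (d+1) : Ordinal) + cnf d x
            < ω ^ (d+1) * (x (d+1) : Ordinal) + ω ^ (d+1) := add_lt_add_right (cnf_lt d x) _
          _ = ω ^ (d+1) * ((x (d+1) + 1 : ℕ) : Ordinal) := by push_cast; rw [mul_add, mul_one]
          _ ≤ ω ^ (d+1) * (y (d+1) : Ordinal) :=
              mul_le_mul_right (by exact_mod_cast hlt) _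
          _ ≤ _ := le_self_add

theorem cnf_le_cnf {d : ℕ} {x y : ℕ → ℕ} (hle : ∀ i ≤ d, x i ≤ y i) :
    cnf d x ≤ cnf d y := by
  by_cases h : ∀ i ≤ d, x i = y i
  · exact (cnf_congr h).le
  · push_neg at h
    obtain ⟨k, hk, hne⟩ := h
    exact (cnf_lt_cnf hle k hk ((hle k hk).lt_of_ne hne)).le

/-- Decompose an ordinal `u < ω^e * p` (`p : ℕ`) as `ω^e * p₁ + r₁` with `p₁ < p`, `r₁ < ω^e`. -/
theorem decompose {e : ℕ} {p : ℕ} {u : Ordinal} (hu : u < ω ^ e * p) :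
    ∃ p₁ : ℕ, ∃ r₁ : Ordinal, p₁ < p ∧ r₁ < ω ^ e ∧ u = ω ^ e * p₁ + r₁ := by
  have hne := omega_pow_ne_zero e
  have hdiv : u / ω ^ e < (p : Ordinal) := (Ordinal.div_lt hne).mpr hu
  have : u / ω ^ e < ω := hdiv.trans (natCast_lt_omega0 p)
  obtain ⟨p₁, hp₁⟩ := Ordinal.lt_omega0.mp this
  refine ⟨p₁, u % ω ^ e, ?_, Ordinal.mod_lt u hne, ?_⟩
  · rw [hp₁] at hdiv; exact_mod_cast hdiv
  · rw [← hp₁]; exact (Ordinal.div_add_mod u _).symm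

theorem nadd_formula_aux (e : ℕ) (habs : ∀ r s : Ordinal.{u}, r < ω ^ e → s < ω ^ e → r ♯ s < ω ^ e) :
    ∀ n : ℕ, ∀ o : Ordinal.{u}, ∀ p q : ℕ, ∀ r s : Ordinal.{u}, p + q ≤ n → r ♯ s ≤ o →
      r < ω ^ e → s < ω ^ e →
      (ω ^ e * p + r) ♯ (ω ^ e * q + s) = ω ^ e * ((p + q : ℕ) : Ordinal) + (r ♯ s) := by
  intro n
  induction n using Nat.strong_induction_on with
  | _ n IHn =>
  intro o
  induction o using Ordinal.induction with
  | _ o IHo =>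
  intro p q r s hpq hrso hr hs
  have key : ∀ u, u < ω ^ e * (p:Ordinal) + r →
      u ♯ (ω ^ e * q + s) < ω ^ e * ((p + q : ℕ) : Ordinal) + (r ♯ s) := by
    intro u hu
    rcases lt_or_ge u (ω ^ e * p) with h | h
    · obtain ⟨p₁, r₁, hp₁, hr₁, rfl⟩ := decompose h
      rw [IHn (p₁ + q) (by omega) (r₁ ♯ s) p₁ q r₁ s le_rfl le_rfl hr₁ hs]
      calc ω ^ e * ((p₁ + q : ℕ) : Ordinal) + (r₁ ♯ s)
          < ω ^ e * ((p₁ + q : ℕ) : Ordinal) + ω ^ e := add_lt_add_right (habs _ _ hr₁ hs) _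
        _ = ω ^ e * ((p₁ + q + 1 : ℕ) : Ordinal) := by rw [Nat.cast_succ, mul_add, mul_one]
        _ ≤ ω ^ e * ((p + q : ℕ) : Ordinal) := mul_le_mul_right (by exact_mod_cast by omega) _
        _ ≤ _ := le_self_add
    · set r₁ := u - ω ^ e * (p:Ordinal) with hr₁def
      have hu' : u = ω ^ e * (p:Ordinal) + r₁ := (Ordinal.add_sub_cancel_of_le h).symm
      have hr₁r : r₁ < r := by
        rw [hu'] at hu
        exact (add_lt_add_iff_left _).mp hu
      have hlt : r₁ ♯ s < r ♯ s := nadd_lt_nadd_right hr₁r s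
      rw [hu', IHo (r₁ ♯ s) (hlt.trans_le hrso) p q r₁ s hpq le_rfl (hr₁r.trans hr) hs]
      exact add_lt_add_right hlt _
  have key' : ∀ v, v < ω ^ e * (q:Ordinal) + s →
      (ω ^ e * p + r) ♯ v < ω ^ e * ((p + q : ℕ) : Ordinal) + (r ♯ s) := by
    intro v hv
    rcases lt_or_ge v (ω ^ e * q) with h | h
    · obtain ⟨q₁, s₁, hq₁, hs₁, rfl⟩ := decompose h
      rw [IHn (p + q₁) (by omega) (r ♯ s₁) p q₁ r s₁ le_rfl le_rfl hr hs₁]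
      calc ω ^ e * ((p + q₁ : ℕ) : Ordinal) + (r ♯ s₁)
          < ω ^ e * ((p + q₁ : ℕ) : Ordinal) + ω ^ e := add_lt_add_right (habs _ _ hr hs₁) _
        _ = ω ^ e * ((p + q₁ + 1 : ℕ) : Ordinal) := by rw [Nat.cast_succ, mul_add, mul_one]
        _ ≤ ω ^ e * ((p + q : ℕ) : Ordinal) := mul_le_mul_right (by exact_mod_cast by omega) _
        _ ≤ _ := le_self_add
    · set s₁ := v - ω ^ e * (q:Ordinal) with hs₁def
      have hv' : v = ω ^ e * (q:Ordinal) + s₁ := (Ordinal.add_sub_cancel_of_le h).symm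
      have hs₁s : s₁ < s := by
        rw [hv'] at hv
        exact (add_lt_add_iff_left _).mp hv
      have hlt : r ♯ s₁ < r ♯ s := nadd_lt_nadd_left hs₁s r
      rw [hv', IHo (r ♯ s₁) (hlt.trans_le hrso) p q r s₁ hpq le_rfl hr (hs₁s.trans hs)]
      exact add_lt_add_right hlt _
  apply le_antisymm
  · exact nadd_le_iff.mpr ⟨key, key'⟩
  · apply le_of_forall_lt
    intro γ hγ
    rcases lt_or_ge γ (ω ^ e * ((p + q : ℕ) : Ordinal)) with h | h
    · calc γ < ω ^ e * ((p + q : ℕ) : Ordinal) := h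
        _ = ω ^ e * p + ω ^ e * q := by push_cast; rw [mul_add]
        _ ≤ (ω ^ e * p) ♯ (ω ^ e * q) := add_le_nadd _ _
        _ ≤ (ω ^ e * p + r) ♯ (ω ^ e * q + s) :=
            nadd_le_nadd (le_self_add) (le_self_add)
    · set t := γ - ω ^ e * ((p + q : ℕ) : Ordinal) with htdef
      have hγ' : γ = ω ^ e * ((p + q : ℕ) : Ordinal) + t := (Ordinal.add_sub_cancel_of_le h).symm
      have ht : t < r ♯ s := by
        rw [hγ'] at hγ
        exact (add_lt_add_iff_left _).mp hγ
      rcases lt_nadd_iff.mp ht with ⟨r', hr', htle⟩ | ⟨s', hs', htle⟩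
      · calc γ = ω ^ e * ((p + q : ℕ) : Ordinal) + t := hγ'
          _ ≤ ω ^ e * ((p + q : ℕ) : Ordinal) + (r' ♯ s) := add_le_add_right htle _
          _ = (ω ^ e * p + r') ♯ (ω ^ e * q + s) :=
              (IHo (r' ♯ s) ((nadd_lt_nadd_right hr' s).trans_le hrso) p q r' s hpq le_rfl
                (hr'.trans hr) hs).symm
          _ < (ω ^ e * p + r) ♯ (ω ^ e * q + s) :=
              nadd_lt_nadd_right (add_lt_add_right hr' _) _
      · calc γ = ω ^ e * ((p + q : ℕ) : Ordinal) + t := hγ'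
          _ ≤ ω ^ e * ((p + q : ℕ) : Ordinal) + (r ♯ s') := add_le_add_right htle _
          _ = (ω ^ e * p + r) ♯ (ω ^ e * q + s') :=
              (IHo (r ♯ s') ((nadd_lt_nadd_left hs' r).trans_le hrso) p q r s' hpq le_rfl
                hr (hs'.trans hs)).symm
          _ < (ω ^ e * p + r) ♯ (ω ^ e * q + s) :=
              nadd_lt_nadd_left (add_lt_add_right hs' _) _

theorem nadd_lt_omega_pow : ∀ e : ℕ, ∀ r s : Ordinal.{u}, r < ω ^ e → s < ω ^ e → r ♯ s < ω ^ e := by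
  intro e
  induction e with
  | zero =>
      intro r s hr hs
      rw [pow_zero] at *
      rw [Ordinal.lt_one_iff_zero] at hr hs
      simp [hr, hs]
  | succ e ih =>
      intro r s hr hs
      have hdec : ∀ x : Ordinal.{u}, x < ω ^ (e+1) →
          ∃ p : ℕ, ∃ x₁ : Ordinal.{u}, x₁ < ω ^ e ∧ x = ω ^ e * (p:Ordinal) + x₁ := by
        intro x hx
        rw [pow_succ] at hx
        have : x / ω ^ e < ω := (Ordinal.div_lt (omega_pow_ne_zero e)).mpr hx
        obtain ⟨n, hn⟩ := Ordinal.lt_omega0.mp this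
        have hxlt : x < ω ^ e * ((n+1 : ℕ) : Ordinal) := by
          conv_lhs => rw [← Ordinal.div_add_mod x (ω ^ e)]
          rw [hn]
          push_cast
          rw [mul_add, mul_one]
          exact add_lt_add_right (Ordinal.mod_lt x (omega_pow_ne_zero e)) _
        obtain ⟨p, x₁, _, hx₁, heq⟩ := decompose hxlt
        exact ⟨p, x₁, hx₁, heq⟩
      obtain ⟨p, r₁, hr₁, rfl⟩ := hdec r hr
      obtain ⟨q, s₁, hs₁, rfl⟩ := hdec s hs
      rw [nadd_formula_aux e (ih) (p+q) (r₁ ♯ s₁) p q r₁ s₁ le_rfl le_rfl hr₁ hs₁]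
      exact principal_add_omega_pow (e+1) (omega_pow_mul_nat_lt e _)
        ((ih _ _ hr₁ hs₁).trans_le (omega_pow_le (by omega)))

theorem nadd_formula (e : ℕ) (p q : ℕ) (r s : Ordinal.{u}) (hr : r < ω ^ e) (hs : s < ω ^ e) :
    (ω ^ e * p + r) ♯ (ω ^ e * q + s) = ω ^ e * ((p + q : ℕ) : Ordinal) + (r ♯ s) :=
  nadd_formula_aux e (nadd_lt_omega_pow e) (p+q) (r ♯ s) p q r s le_rfl le_rfl hr hs

theorem cnf_nadd (d : ℕ) (a b : ℕ → ℕ) :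
    cnf d a ♯ cnf d b = cnf d (fun i => a i + b i) := by
  induction d with
  | zero =>
      rw [cnf_zero, cnf_zero, cnf_zero, nadd_nat]
      push_cast
      rfl
  | succ d ih =>
      rw [cnf_succ, cnf_succ, cnf_succ,
        nadd_formula (d+1) (a (d+1)) (b (d+1)) _ _ (cnf_lt d a) (cnf_lt d b), ih]

theorem cnf_add_cnf {d e : ℕ} {a b : ℕ → ℕ} (hed : e ≤ d) (hbe : b e ≠ 0)
    (hb : ∀ i ≤ d, e < i → b i = 0) :
    cnf d a + cnf d b =
      cnf d (fun i => if e < i then a i else if i = e then a i + b i else b i) := by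
  induction d with
  | zero =>
      have he0 : e = 0 := Nat.le_zero.mp hed
      subst he0
      rw [cnf_zero, cnf_zero, cnf_zero]
      simp
  | succ d ih =>
      rcases Nat.lt_succ_iff_lt_or_eq.mp (Nat.lt_succ_of_le hed) with hlt | heq
      · have hed' : e ≤ d := Nat.lt_succ_iff.mp hlt
        have hb1 : b (d+1) = 0 := hb (d+1) le_rfl (by omega)
        rw [cnf_succ, cnf_succ, cnf_succ, hb1]
        have key := ih hed' (fun i hi hei => hb i (by omega) hei)
        rw [Nat.cast_zero, mul_zero, zero_add, add_assoc, key]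
        congr 1
        · simp [Nat.lt_succ_of_le hed']
      · subst heq
        rw [cnf_succ, cnf_succ, cnf_succ]
        have habs : cnf d a + ω ^ (d+1) * ((b (d+1) : ℕ) : Ordinal) = ω ^ (d+1) * (b (d+1)) := by
          apply add_omega_pow_mul (cnf_lt d a) hbe
        rw [add_assoc, ← add_assoc (cnf d a), habs, ← add_assoc, ← mul_add]
        have hcast : ((a (d+1) : Ordinal) + b (d+1)) = ((a (d+1) + b (d+1) : ℕ) : Ordinal) := by
          push_cast; rfl
        rw [hcast]
        congr 1
        · simp
        · apply cnf_congr
          intro i hi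
          have h1 : ¬ (d+1 < i) := by omega
          have h2 : i ≠ d+1 := by omega
          simp [h1, h2]

/-- For nonzero ordinals  below  with Cantor normal forms given by the
coefficients  resp. , the ordinary sum  agrees with the natural sum 
if and only if the degree of  (the largest index carrying a nonzero coefficient) is at
most the order of  (the smallest index carrying a nonzero coefficient). -/
theorem add_eq_nadd_iff (d : ℕ) (a b : ℕ → ℕ) (α β : Ordinal)
    (hα : α = cnf d a) (hβ : β = cnf d b) (hα0 : α ≠ 0) (hβ0 : β ≠ 0) :
    α + β = α ♯ β ↔ ∀ i ≤ d, ∀ j ≤ d, b i ≠ 0 → a j ≠ 0 → i ≤ j := by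
  classical
  have hex : ∃ i, i ≤ d ∧ b i ≠ 0 := by
    by_contra h
    push_neg at h
    exact hβ0 (hβ.trans (cnf_eq_zero fun i hi => h i hi))
  obtain ⟨i₀, hi₀d, hi₀⟩ := hex
  set e := Nat.findGreatest (fun i => b i ≠ 0) d with he
  have hed : e ≤ d := Nat.findGreatest_le d
  have hbe : b e ≠ 0 := by
    have := Nat.findGreatest_spec (P := fun i => b i ≠ 0) hi₀d hi₀
    exact this
  have hhigh : ∀ i ≤ d, e < i → b i = 0 := by
    intro i hid hei
    by_contra hbi
    exact (Nat.findGreatest_is_greatest (P := fun i => b i ≠ 0) hei hid) hbi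
  set c : ℕ → ℕ := fun i => if e < i then a i else if i = e then a i + b i else b i with hc
  have hadd : α + β = cnf d c := by
    rw [hα, hβ]; exact cnf_add_cnf hed hbe hhigh
  have hnadd : α ♯ β = cnf d (fun i => a i + b i) := by
    rw [hα, hβ]; exact cnf_nadd d a b
  have hcle : ∀ i ≤ d, c i ≤ a i + b i := by
    intro i hi
    simp only [hc]
    split_ifs with h1 h2
    · omega
    · omega
    · omega
  constructor
  · intro h i hi j hj hbi haj
    by_contra hji
    have hie : i ≤ e := by
      by_contra hei
      exact hbi (hhigh i hi (by omega))
    have hje : j < e := by omega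
    have hstrict : c j < a j + b j := by
      simp only [hc]
      have h1 : ¬ (e < j) := by omega
      have h2 : j ≠ e := by omega
      simp only [h1, h2, if_false]
      omega
    have : cnf d c < cnf d (fun i => a i + b i) := cnf_lt_cnf hcle j hj hstrict
    rw [← hadd, ← hnadd] at this
    exact absurd h this.ne
  · intro hC
    rw [hadd, hnadd]
    apply cnf_congr
    intro i hi
    simp only [hc]
    split_ifs with h1 h2
    · have := hhigh i hi h1; omega
    · rfl
    · have hae : a i = 0 := by
        by_contra hai
        exact absurd (hC e hed i hi hbe hai) (by omega)
      omega
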